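/- Let ρ be any 2×2 complex matrix with tr(ρ) = 1. Then tr_{23}[Π₃ ρ^{⊗3} Π₃] = (1/3)·ρ + (2/3)·ρ³, where tr_{23} denotes the partial trace over the second and third tensor factors of (ℂ²)^{⊗3}. (Output of the three-copy symmetric-projection purification circuit.) -/

import Mathlib

open Matrix

/-- Permutation matrix on `(ℂ^d)^{⊗n}` permuting tensor factors. -/
noncomputable def permMat (n d : ℕ) (σ : Equiv.Perm (Fin n)) :
    Matrix (Fin n → Fin d) (Fin n → Fin d) ℂ :=
  Matrix.of fun v w => if v = w ∘ σ then 1 else 0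

/-- Projector onto the symmetric subspace of `(ℂ^d)^{⊗n}`. -/
noncomputable def symProj (n d : ℕ) :
    Matrix (Fin n → Fin d) (Fin n → Fin d) ℂ :=
  ((n.factorial : ℂ)⁻¹) • ∑ σ : Equiv.Perm (Fin n), permMat n d σ

/-- `n`-fold tensor (Kronecker) power of a `d×d` matrix. -/
noncomputable def tpow {d : ℕ} (A : Matrix (Fin d) (Fin d) ℂ) (n : ℕ) :
    Matrix (Fin n → Fin d) (Fin n → Fin d) ℂ :=
  Matrix.of fun v w => ∏ i, A (v i) (w i)

/-- Partial trace over all tensor factors except the first. -/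
noncomputable def ptrRest {n d : ℕ}
    (M : Matrix (Fin (n + 1) → Fin d) (Fin (n + 1) → Fin d) ℂ) :
    Matrix (Fin d) (Fin d) ℂ :=
  Matrix.of fun i j => ∑ t : Fin n → Fin d, M (Fin.cons i t) (Fin.cons j t)

lemma sum_perm_fin3 {M : Type*} [AddCommMonoid M] (f : Equiv.Perm (Fin 3) → M) :
    ∑ σ : Equiv.Perm (Fin 3), f σ =
      f 1 + f (Equiv.swap 0 1) + f (Equiv.swap 0 2) + f (Equiv.swap 1 2) +
      f (Equiv.swap 0 1 * Equiv.swap 1 2) + f (Equiv.swap 1 2 * Equiv.swap 0 1) := by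
  rw [show (Finset.univ : Finset (Equiv.Perm (Fin 3))) =
    ⟨([1, Equiv.swap 0 1, Equiv.swap 0 2, Equiv.swap 1 2,
     Equiv.swap 0 1 * Equiv.swap 1 2, Equiv.swap 1 2 * Equiv.swap 0 1] : List (Equiv.Perm (Fin 3))),
     by decide⟩ from by decide]
  simp [Finset.sum_mk]
  abel

lemma sum_fun22 {M : Type*} [AddCommMonoid M] (f : (Fin 2 → Fin 2) → M) :
    ∑ t : Fin 2 → Fin 2, f t = f ![0,0] + f ![0,1] + f ![1,0] + f ![1,1] := by
  rw [show (Finset.univ : Finset (Fin 2 → Fin 2)) =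
    ⟨([![0,0], ![0,1], ![1,0], ![1,1]] : List (Fin 2 → Fin 2)), by decide⟩ from by decide]
  simp [Finset.sum_mk]
  abel

lemma sum_fun32 {M : Type*} [AddCommMonoid M] (f : (Fin 3 → Fin 2) → M) :
    ∑ t : Fin 3 → Fin 2, f t = f ![0,0,0] + f ![0,0,1] + f ![0,1,0] + f ![0,1,1]
      + f ![1,0,0] + f ![1,0,1] + f ![1,1,0] + f ![1,1,1] := by
  rw [show (Finset.univ : Finset (Fin 3 → Fin 2)) =
    ⟨([![0,0,0], ![0,0,1], ![0,1,0], ![0,1,1], ![1,0,0], ![1,0,1], ![1,1,0], ![1,1,1]] :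
      List (Fin 3 → Fin 2)), by decide⟩ from by decide]
  simp [Finset.sum_mk]
  abel

lemma symProj32_apply (v w : Fin 3 → Fin 2) : symProj 3 2 v w =
    (6:ℂ)⁻¹ * ((if v = w then 1 else 0) + (if v = w ∘ ⇑(Equiv.swap (0:Fin 3) 1) then 1 else 0)
      + (if v = w ∘ ⇑(Equiv.swap (0:Fin 3) 2) then 1 else 0)
      + (if v = w ∘ ⇑(Equiv.swap (1:Fin 3) 2) then 1 else 0)
      + (if v = w ∘ ⇑(Equiv.swap (0:Fin 3) 1) ∘ ⇑(Equiv.swap (1:Fin 3) 2) then 1 else 0)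
      + (if v = w ∘ ⇑(Equiv.swap (1:Fin 3) 2) ∘ ⇑(Equiv.swap (0:Fin 3) 1) then 1 else 0)) := by
  simp only [symProj, Matrix.smul_apply, Matrix.sum_apply, sum_perm_fin3, permMat,
    Matrix.of_apply, Equiv.Perm.coe_one, Function.comp_id, Equiv.Perm.coe_mul,
    Function.comp_assoc, smul_eq_mul]
  norm_num [Nat.factorial]
  rfl

lemma vec3_two (a b c : Fin 2) : ![a,b,c] 2 = c := rfl

lemma tpow3_apply (ρ : Matrix (Fin 2) (Fin 2) ℂ) (v w : Fin 3 → Fin 2) :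
    tpow ρ 3 v w = ρ (v 0) (w 0) * ρ (v 1) (w 1) * ρ (v 2) (w 2) := by
  simp [tpow, Fin.prod_univ_succ]
  ring

set_option maxHeartbeats 4000000 in
/-- output of the three-copy purification circuit. For any
`2×2` complex matrix `ρ` with `tr ρ = 1`,
`tr₂₃[Π₃ ρ^{⊗3} Π₃] = (1/3)·ρ + (2/3)·ρ³`. -/
theorem stmt15 (ρ : Matrix (Fin 2) (Fin 2) ℂ) (hρ : ρ.trace = 1) :
    ptrRest (n := 2) (symProj 3 2 * tpow ρ 3 * symProj 3 2)
      = ((1 : ℂ) / 3) • ρ + ((2 : ℂ) / 3) • ρ ^ 3 := by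
  have h11 : ρ 1 1 = 1 - ρ 0 0 := by
    simp [Matrix.trace, Fin.sum_univ_two] at hρ
    linear_combination hρ
  ext i j
  fin_cases i <;> fin_cases j
  all_goals
    simp only [ptrRest, Matrix.of_apply, sum_fun22, Matrix.mul_apply, sum_fun32,
      symProj32_apply, tpow3_apply, Matrix.add_apply, Matrix.smul_apply,
      pow_succ, pow_zero, one_mul, smul_eq_mul]
    simp (config := { decide := true }) only [Fin.isValue, Fin.cons_zero, Fin.cons_succ,
      Matrix.cons_val_zero, Matrix.cons_val_one, Matrix.head_cons, vec3_two,
      Fin.mk_zero, Fin.mk_one, Fin.sum_univ_two, if_true, if_false]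
    rw [h11]
    ring
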